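/- For every configuration S ∈ 𝒟∖{𝒟₀}, φ₁(S) ≥ log(|S|/4). -/

import Mathlib

open MeasureTheory Filter
open scoped ENNReal NNReal

namespace EV

/-- A configuration of the exclusion-voter model is the finite hybrid-zone word
(`false` = 0, `true` = 1); the full two-sided configuration is `1^∞ w 0^∞`. -/
abbrev Word := List Bool

/-- Canonical (normalized) words: empty (the ground state `𝒟₀`) or starting with
a `0` and ending with a `1`; these are in bijection with the configuration space `𝒟`. -/
def IsConfig (w : Word) : Prop :=
  w = [] ∨ (w.head? = some false ∧ w.getLast? = some true)

/-- The ground-state Heaviside configuration `𝒟₀ = …111000…`. -/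
def groundState : Word := []

/-- Pad a word with one boundary symbol of the adjacent infinite block on each side. -/
def pad (w : Word) : Word := true :: (w ++ [false])

/-- Normalize: strip leading `1`s (they merge into the left infinite block of `1`s)
and trailing `0`s (they merge into the right infinite block of `0`s). -/
def strip (w : Word) : Word :=
  ((w.dropWhile (· = true)).reverse.dropWhile (· = false)).reverse

def setPair (w : Word) (i : ℕ) (a b : Bool) : Word := (w.set i a).set (i + 1) b

def swapPair (w : Word) (i : ℕ) : Word :=
  setPair w i (w.getD (i + 1) true) (w.getD i true)

/-- Indices of the unlike adjacent pairs (`01` or `10`), read off the padded word. -/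
def unlike (w : Word) : List ℕ :=
  (List.range (w.length + 1)).filter
    (fun i => (pad w).getD i true ≠ (pad w).getD (i + 1) true)

/-- One-step transition kernel of the discrete-time exclusion-voter chain with mixing
parameter `β` and exclusion parameter `p`: an unlike adjacent pair is chosen uniformly
at random; with probability `β` a voter move flips the pair to `00` or `11` (each with
probability `1/2`); with probability `1-β` an exclusion move swaps a `01` with
probability `p` and a `10` with probability `1-p` (otherwise no change). -/
noncomputable def P (β p : ℝ) (w w' : Word) : ℝ :=
  ((unlike w).map (fun i =>
    let a := (pad w).getD i true
    let swapProb := if a then 1 - p else p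
    ((unlike w).length : ℝ)⁻¹ *
      (β * (1 / 2) * (if strip (setPair (pad w) i false false) = w' then 1 else 0)
       + β * (1 / 2) * (if strip (setPair (pad w) i true true) = w' then 1 else 0)
       + (1 - β) * swapProb * (if strip (swapPair (pad w) i) = w' then 1 else 0)
       + (1 - β) * (1 - swapProb) * (if w = w' then 1 else 0)))).sum

/-- `n`-step transition probabilities. -/
noncomputable def Pn (β p : ℝ) : ℕ → Word → Word → ℝ
  | 0 => fun w w' => if w = w' then 1 else 0
  | n + 1 => fun w w' => ∑' z : Word, Pn β p n w z * P β p z w'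

/-- `w'` is accessible from `w`: some `n`-step transition probability is positive. -/
def Accessible (β p : ℝ) (w w' : Word) : Prop :=
  ∃ n : ℕ, 0 < n ∧ 0 < Pn β p n w w'

/-- Two states communicate: each is accessible from the other. -/
def Communicate (β p : ℝ) (w w' : Word) : Prop :=
  Accessible β p w w' ∧ Accessible β p w' w

instance : MeasurableSpace Word := ⊤

/-- `ξ` is (a realization of) the discrete-time exclusion-voter Markov chain with
parameters `(β, p)` under the probability measure `μ`. -/
def IsEVChain (β p : ℝ) {Ω : Type*} [MeasurableSpace Ω] (μ : Measure Ω)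
    (ξ : ℕ → Ω → Word) : Prop :=
  (∀ t, Measurable (ξ t)) ∧
  ∀ (t : ℕ) (path : ℕ → Word),
    μ {ω | ∀ i ≤ t + 1, ξ i ω = path i}
      = μ {ω | ∀ i ≤ t, ξ i ω = path i} * ENNReal.ofReal (P β p (path t) (path (t + 1)))

/-- The relaxation time `τ = min {t ∈ ℕ, t ≥ 1 : ξ_t = 𝒟₀}` (`∞` if there is no such `t`). -/
noncomputable def relaxTime {Ω : Type*} (ξ : ℕ → Ω → Word) (ω : Ω) : ℝ≥0∞ :=
  sInf {r : ℝ≥0∞ | ∃ t : ℕ, 0 < t ∧ ξ t ω = groundState ∧ r = (t : ℝ≥0∞)}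

/-- The size `|S|` of the hybrid zone. -/
def hz (w : Word) : ℕ := w.length

/-- The number of blocks `N(S)`: the number of (finite) `1`-blocks of the hybrid zone. -/
def nb (w : Word) : ℕ :=
  ((Finset.range w.length).filter
    (fun b => w.getD b false = true ∧ (b = 0 ∨ w.getD (b - 1) true = false))).card

/-- Number of `0`s among the first `c` positions of the hybrid zone. -/
def z0 (w : Word) (c : ℕ) : ℕ :=
  ((Finset.range c).filter (fun a => w.getD a true = false)).card

/-- Number of `1`s of the hybrid zone at positions `≥ c`. -/
def o1 (w : Word) (c : ℕ) : ℕ :=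
  ((Finset.Ico c w.length).filter (fun b => w.getD b false = true)).card

/-- `f₁(S) = Σᵢ mᵢ Rᵢ = Σᵢ nᵢ Tᵢ`: each `1` contributes the number of `0`s to its left. -/
def f1 (w : Word) : ℕ :=
  ∑ b ∈ (Finset.range w.length).filter (fun b => w.getD b false = true), z0 w b

/-- `f₂(S) = (1/2)(Σᵢ mᵢ Rᵢ² + Σᵢ nᵢ Tᵢ²)`: each `1` contributes the squared number of
`0`s to its left, each `0` the squared number of `1`s to its right. -/
noncomputable def f2 (w : Word) : ℝ :=
  (1 / 2) *
    ((∑ b ∈ (Finset.range w.length).filter (fun b => w.getD b false = true),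
        ((z0 w b : ℝ)) ^ 2)
     + (∑ a ∈ (Finset.range w.length).filter (fun a => w.getD a true = false),
        ((o1 w (a + 1) : ℝ)) ^ 2))

/-- `g(S) = max_{1 ≤ k ≤ N} R_k T_k`: the maximum over the `01`-corners of
(number of `0`s up to the corner) × (number of `1`s after the corner). -/
def gfun (w : Word) : ℕ :=
  ((Finset.range w.length).filter
    (fun a => w.getD a true = false ∧ w.getD (a + 1) false = true)).sup
    (fun a => z0 w (a + 1) * o1 w (a + 1))

/-- `φ₁(S) = Σᵢ Σ_{j=R_{i-1}+1}^{R_i} Σ_{k=1}^{T_i} 1/(j+k)`: the `j`-th `0` (at position `a`,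
so `j = z0 w (a+1)`) contributes `Σ_{k=1}^{T} 1/(j+k)` with `T` the number of `1`s to its right. -/
noncomputable def phi1 (w : Word) : ℝ :=
  ∑ a ∈ (Finset.range w.length).filter (fun a => w.getD a true = false),
    ∑ k ∈ Finset.Icc 1 (o1 w (a + 1)), (1 : ℝ) / ((z0 w (a + 1) : ℝ) + (k : ℝ))


lemma sum_one_div_ge_log (c : ℕ) (m : ℕ) :
    Real.log ((c:ℝ)+m+1) - Real.log ((c:ℝ)+1) ≤ ∑ k ∈ Finset.Icc 1 m, 1/((c:ℝ)+k) := by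
  induction m with
  | zero => simp
  | succ m ih =>
    rw [Finset.sum_Icc_succ_top (by omega : 1 ≤ m+1)]
    have h1 : (0:ℝ) < (c:ℝ) + (m+1:ℕ) := by positivity
    have key : Real.log ((c:ℝ)+(m+1:ℕ)+1) - Real.log ((c:ℝ)+(m+1:ℕ)) ≤ 1/((c:ℝ)+(m+1:ℕ)) := by
      rw [← Real.log_div (by positivity) (by positivity)]
      have h2 := Real.log_le_sub_one_of_pos (show (0:ℝ) < ((c:ℝ)+(m+1:ℕ)+1)/((c:ℝ)+(m+1:ℕ)) by positivity)
      calc _ ≤ ((c:ℝ)+(m+1:ℕ)+1)/((c:ℝ)+(m+1:ℕ)) - 1 := h2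
        _ = 1/((c:ℝ)+(m+1:ℕ)) := by field_simp; ring
    push_cast at key ih ⊢
    simp only [one_div] at key ih ⊢
    ring_nf at key ih ⊢
    linarith

lemma z0_succ (w : Word) (c : ℕ) :
    z0 w (c+1) = z0 w c + (if w.getD c true = false then 1 else 0) := by
  unfold z0
  rw [Finset.range_add_one, Finset.filter_insert]
  split
  · rw [Finset.card_insert_of_notMem (fun h => Finset.notMem_range_self (Finset.mem_filter.mp h).1)]
  · simp

lemma z0_reindex (w : Word) (g : ℕ → ℝ) (c : ℕ) :
    ∑ a ∈ (Finset.range c).filter (fun a => w.getD a true = false), g (z0 w (a+1))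
      = ∑ j ∈ Finset.Icc 1 (z0 w c), g j := by
  induction c with
  | zero => simp [z0]
  | succ c ih =>
    rw [Finset.range_add_one, Finset.filter_insert]
    by_cases hc : w.getD c true = false
    · rw [if_pos hc, Finset.sum_insert (fun h => Finset.notMem_range_self (Finset.mem_filter.mp h).1),
        ih, z0_succ, if_pos hc]
      rw [Finset.sum_Icc_succ_top (by omega : 1 ≤ z0 w c + 1)]
      ring
    · rw [if_neg hc, ih, z0_succ, if_neg hc]
      simp

/-- Lemma 10: for every `S ∈ 𝒟 ∖ {𝒟₀}`, `φ₁(S) ≥ log(|S|/4)`. -/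
theorem phi1_lower_bound (S : Word) (hS : IsConfig S) (hne : S ≠ groundState) :
    Real.log ((hz S : ℝ) / 4) ≤ phi1 S := by
  obtain h | ⟨hhead, hlast⟩ := hS
  · exact absurd h hne
  have hne' : S ≠ [] := hne
  set n := S.length with hn
  have hn1 : 0 < n := List.length_pos_iff.mpr hne'
  have hget0 : S.getD 0 true = false := by
    rw [List.getD_eq_getElem?_getD, ← List.head?_eq_getElem?, hhead]; rfl
  have hgetlast : S.getD (n-1) false = true := by
    rw [List.getD_eq_getElem?_getD, ← List.getLast?_eq_getElem?, hlast]; rfl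
  have hiff : ∀ a, a < n → ((S.getD a false = true) ↔ ¬(S.getD a true = false)) := by
    intro a ha
    rw [List.getD_eq_getElem S false ha, List.getD_eq_getElem S true ha]
    cases S[a] <;> simp
  set zeros := (Finset.range n).filter (fun a => S.getD a true = false) with hzeros
  set T := o1 S 0 with hTdef
  have hT1 : 1 ≤ T := by
    apply Finset.card_pos.mpr
    exact ⟨n-1, Finset.mem_filter.mpr ⟨Finset.mem_Ico.mpr ⟨Nat.zero_le _, by omega⟩, hgetlast⟩⟩
  have ho1_le : ∀ a : ℕ, o1 S (a+1) ≤ T :=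
    fun a => Finset.card_le_card (Finset.filter_subset_filter _ (Finset.Ico_subset_Ico (Nat.zero_le _) le_rfl))
  have ho1_pos : ∀ a ∈ zeros, 1 ≤ o1 S (a+1) := by
    intro a ha
    obtain ⟨ha1, ha2⟩ := Finset.mem_filter.mp ha
    have han : a < n := Finset.mem_range.mp ha1
    have hane : a ≠ n - 1 := by
      intro h; rw [h] at ha2; exact ((hiff (n-1) (by omega)).mp hgetlast) ha2
    apply Finset.card_pos.mpr
    exact ⟨n-1, Finset.mem_filter.mpr ⟨Finset.mem_Ico.mpr ⟨by omega, by omega⟩, hgetlast⟩⟩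
  have ho1_1 : o1 S 1 = T := by
    rw [hTdef]; unfold o1
    have hIco : Finset.Ico 0 n = insert 0 (Finset.Ico 1 n) := by
      ext x; simp only [Finset.mem_Ico, Finset.mem_insert]; omega
    rw [← hn, hIco, Finset.filter_insert, if_neg]
    intro h
    exact ((hiff 0 hn1).mp h) hget0
  have hz0_1 : z0 S 1 = 1 := by
    unfold z0
    rw [Finset.range_one, Finset.filter_singleton, if_pos hget0, Finset.card_singleton]
  have hz0_pos : ∀ a ∈ zeros, 1 ≤ z0 S (a+1) := by
    intro a ha
    obtain ⟨_, ha2⟩ := Finset.mem_filter.mp ha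
    exact Finset.card_pos.mpr ⟨a, Finset.mem_filter.mpr ⟨Finset.mem_range.mpr (by omega), ha2⟩⟩
  have hRT : z0 S n + T = n := by
    rw [hTdef]; unfold z0 o1
    rw [← hn, ← Finset.range_eq_Ico]
    rw [Finset.filter_congr (fun a ha => by
      rw [hiff a (Finset.mem_range.mp ha)] : ∀ a ∈ Finset.range n,
        (S.getD a false = true) ↔ ¬(S.getD a true = false))]
    rw [Finset.card_filter_add_card_filter_not, Finset.card_range]
  set R := z0 S n with hRdef
  set inner : ℕ → ℝ := fun a => ∑ k ∈ Finset.Icc 1 (o1 S (a + 1)), (1 : ℝ) / ((z0 S (a + 1) : ℝ) + (k : ℝ)) with hinner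
  set g : ℕ → ℝ := fun a => 1/((z0 S (a+1) : ℝ) + (T : ℝ)) with hg
  have h0mem : 0 ∈ zeros := Finset.mem_filter.mpr ⟨Finset.mem_range.mpr hn1, hget0⟩
  have hphi : phi1 S = ∑ a ∈ zeros, inner a := rfl
  set A : ℝ := ∑ k ∈ Finset.Icc 1 (T-1), (1:ℝ)/(1+(k:ℝ)) with hA
  have hinner0 : inner 0 = A + g 0 := by
    simp only [hinner, hg, hz0_1, ho1_1, Nat.cast_one]
    have hT' : T - 1 + 1 = T := by omega
    rw [← hT', Finset.sum_Icc_succ_top (by omega : 1 ≤ T - 1 + 1), hT']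
    try push_cast [Nat.cast_sub hT1]
    try ring_nf
  have hstep3 : ∀ a ∈ zeros, g a ≤ inner a := by
    intro a ha
    have h1 := ho1_pos a ha
    have h2 := ho1_le a
    have h3 := hz0_pos a ha
    have hm : o1 S (a+1) ∈ Finset.Icc 1 (o1 S (a+1)) := Finset.mem_Icc.mpr ⟨h1, le_rfl⟩
    have hpos : (0:ℝ) < (z0 S (a+1) : ℝ) + (o1 S (a+1) : ℝ) := by
      have : (0:ℕ) < z0 S (a+1) + o1 S (a+1) := by omega
      exact_mod_cast this
    calc g a ≤ (1:ℝ)/((z0 S (a+1) : ℝ) + (o1 S (a+1) : ℝ)) := by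
          apply one_div_le_one_div_of_le hpos
          have : z0 S (a+1) + o1 S (a+1) ≤ z0 S (a+1) + T := by omega
          exact_mod_cast this
      _ ≤ inner a := Finset.single_le_sum (f := fun k : ℕ => (1:ℝ)/((z0 S (a+1):ℝ) + (k:ℝ))) (fun k _ => div_nonneg zero_le_one (add_nonneg (Nat.cast_nonneg _) (Nat.cast_nonneg _))) hm
  have hB : ∑ a ∈ zeros, g a = ∑ j ∈ Finset.Icc 1 R, 1/((j:ℝ) + (T:ℝ)) := by
    rw [hRdef, hzeros, ← z0_reindex S (fun j => 1/((j:ℝ) + (T:ℝ))) n]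
  have hmain : A + ∑ a ∈ zeros, g a ≤ phi1 S := by
    rw [hphi, ← Finset.add_sum_erase _ inner h0mem, ← Finset.add_sum_erase _ g h0mem, hinner0]
    have : ∑ a ∈ zeros.erase 0, g a ≤ ∑ a ∈ zeros.erase 0, inner a :=
      Finset.sum_le_sum (fun a ha => hstep3 a (Finset.mem_of_mem_erase ha))
    linarith
  have hAbound : Real.log ((T:ℝ)+1) - Real.log 2 ≤ A := by
    have h := sum_one_div_ge_log 1 (T-1)
    push_cast [Nat.cast_sub hT1] at h
    have e1 : (1:ℝ) + ((T:ℝ)-1) + 1 = (T:ℝ)+1 := by ring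
    have e2 : (1:ℝ)+1 = 2 := by norm_num
    rw [e1, e2] at h
    rw [hA]
    linarith
  have hBbound : Real.log ((n:ℝ)+1) - Real.log ((T:ℝ)+1) ≤ ∑ j ∈ Finset.Icc 1 R, 1/((j:ℝ) + (T:ℝ)) := by
    have h := sum_one_div_ge_log T R
    have hc : ((T:ℝ)+(R:ℝ)+1) = (n:ℝ)+1 := by
      have : T + R = n := by omega
      push_cast [← this]; ring
    rw [hc] at h
    calc Real.log ((n:ℝ)+1) - Real.log ((T:ℝ)+1) ≤ ∑ k ∈ Finset.Icc 1 R, 1/((T:ℝ)+(k:ℝ)) := h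
      _ = ∑ j ∈ Finset.Icc 1 R, 1/((j:ℝ) + (T:ℝ)) := Finset.sum_congr rfl (fun j _ => by ring_nf)
  have hfinal : Real.log ((n:ℝ)/4) ≤ Real.log ((n:ℝ)+1) - Real.log 2 := by
    rw [Real.log_div (by positivity) (by norm_num)]
    have h1 : Real.log (n:ℝ) ≤ Real.log ((n:ℝ)+1) := by
      apply Real.log_le_log (by positivity); linarith
    have h2 : Real.log 2 ≤ Real.log 4 := by
      apply Real.log_le_log (by norm_num); norm_num
    linarith
  rw [hB] at hmain
  have : (hz S : ℝ) = (n : ℝ) := by rw [hz, hn]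
  rw [this]
  linarith

end EV
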